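/- Let d ≥ 1 and let A be a measurement with n outcomes on ℂ^d. Then A is post-processing maximal (i.e., for every measurement B with any finite number of outcomes, A ⪯ B implies B ⪯ A) if and only if A is rank-1, i.e., every nonzero effect A x has matrix rank equal to 1. -/

import Mathlib

open Matrix
open scoped Kronecker ComplexOrder

noncomputable section

/-- A measurement (POVM): a finite family of positive semidefinite matrices summing to `1`. -/
def IsMeasurement {ι κ : Type*} [Fintype ι] [DecidableEq ι] [Fintype κ]
    (A : κ → Matrix ι ι ℂ) : Prop :=
  (∀ x, (A x).PosSemidef) ∧ ∑ x, A x = 1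

/-- `A` is a post-processing of `B`: `A ⪯ B`. -/
def PostProc {ι : Type*} {n m : ℕ}
    (A : Fin n → Matrix ι ι ℂ) (B : Fin m → Matrix ι ι ℂ) : Prop :=
  ∃ μ : Fin n → Fin m → ℝ,
    (∀ x y, 0 ≤ μ x y) ∧ (∀ y, ∑ x, μ x y = 1) ∧
    (∀ x, A x = ∑ y, (μ x y : ℂ) • B y)

/-- The outer product `|E⟩⟨F|` of the vectorizations of two matrices. -/
def outerProd {ι : Type*} (E F : Matrix ι ι ℂ) : Matrix (ι × ι) (ι × ι) ℂ :=
  Matrix.of fun p q => E p.1 p.2 * star (F q.1 q.2)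

/-- The (un-normalized) Fisher information map of a measurement. -/
noncomputable def Fisher {ι κ : Type*} [Fintype ι] [Fintype κ]
    (A : κ → Matrix ι ι ℂ) : Matrix (ι × ι) (ι × ι) ℂ :=
  ∑ x, (Matrix.trace (A x))⁻¹ • outerProd (A x) (A x)

/-- The positive semidefinite square root of a positive semidefinite matrix
(the former Mathlib `Matrix.PosSemidef.sqrt`). -/
noncomputable def posSemidefSqrt {ι : Type*} [Fintype ι] [DecidableEq ι]
    {A : Matrix ι ι ℂ} (hA : A.PosSemidef) : Matrix ι ι ℂ :=
  hA.1.eigenvectorUnitary.1 * diagonal ((↑) ∘ (√·) ∘ hA.1.eigenvalues) *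
  (star hA.1.eigenvectorUnitary : Matrix ι ι ℂ)

/-- The generalized Fisher information map of a measurement, relative to a
positive definite state `ρ` (with positive semidefinite square root `ρ^{1/2}`). -/
noncomputable def FisherRho {ι κ : Type*} [Fintype ι] [DecidableEq ι] [Fintype κ]
    {ρ : Matrix ι ι ℂ} (hρ : ρ.PosDef) (A : κ → Matrix ι ι ℂ) :
    Matrix (ι × ι) (ι × ι) ℂ :=
  ∑ x, (Matrix.trace (ρ * A x))⁻¹ •
    outerProd (posSemidefSqrt hρ.posSemidef * A x) (posSemidefSqrt hρ.posSemidef * A x)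

/-- The height of a finite family of self-adjoint matrices: the infimum of the traces of
Hermitian matrices dominating every member in the Loewner order. -/
noncomputable def height {ι κ : Type*} [Fintype ι] [Fintype κ]
    (X : κ → Matrix ι ι ℂ) : ℝ :=
  sInf { t : ℝ | ∃ H : Matrix ι ι ℂ, H.IsHermitian ∧
    (∀ i, (H - X i).PosSemidef) ∧ t = (Matrix.trace H).re }

section Aux
variable {d : ℕ}


lemma psd_sum {κ : Type*} [Fintype κ] (s : Finset κ) (f : κ → Matrix (Fin d) (Fin d) ℂ)
    (h : ∀ x ∈ s, (f x).PosSemidef) : (∑ x ∈ s, f x).PosSemidef := by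
  classical
  induction s using Finset.induction with
  | empty => simpa using Matrix.PosSemidef.zero
  | insert _ _ hx ih =>
    rw [Finset.sum_insert hx]
    exact (h _ (Finset.mem_insert_self _ _)).add (ih fun x hxs => h x (Finset.mem_insert_of_mem hxs))

lemma psd_smul {c : ℝ} (hc : 0 ≤ c) {C : Matrix (Fin d) (Fin d) ℂ} (hC : C.PosSemidef) :
    ((c : ℂ) • C).PosSemidef := by
  refine Matrix.PosSemidef.of_dotProduct_mulVec_nonneg ?_ fun x => ?_
  · unfold Matrix.IsHermitian
    rw [conjTranspose_smul, hC.1.eq]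
    congr 1
    simp [Complex.ext_iff]
  · rw [smul_mulVec, dotProduct_smul]
    exact mul_nonneg (by simp [Complex.le_def, hc]) (hC.dotProduct_mulVec_nonneg x)

lemma psd_neg_zero {C : Matrix (Fin d) (Fin d) ℂ} (hC : C.PosSemidef) (h : (-C).PosSemidef) :
    C = 0 := by
  have hv : ∀ x : Fin d → ℂ, C *ᵥ x = 0 := by
    intro x
    refine (hC.dotProduct_mulVec_zero_iff x).mp (le_antisymm ?_ (hC.dotProduct_mulVec_nonneg x))
    have := h.dotProduct_mulVec_nonneg x
    rw [neg_mulVec, dotProduct_neg] at this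
    exact neg_nonneg.mp this
  ext i j
  have := congrFun (hv (Pi.single j 1)) i
  simpa using this

lemma star_single_one (i : Fin d) : star (Pi.single i 1 : Fin d → ℂ) = Pi.single i 1 := by
  ext k
  rcases eq_or_ne k i with rfl | h
  · simp
  · simp [Pi.single_apply, h]

lemma psd_diag_nonneg {C : Matrix (Fin d) (Fin d) ℂ} (hC : C.PosSemidef) (i : Fin d) :
    0 ≤ C i i := by
  have := hC.dotProduct_mulVec_nonneg (Pi.single i 1)
  rwa [star_single_one, mulVec_single, MulOpposite.op_one, one_smul,
    single_dotProduct, one_mul, col_apply] at this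

lemma psd_trace_nonneg {C : Matrix (Fin d) (Fin d) ℂ} (hC : C.PosSemidef) :
    0 ≤ C.trace :=
  Finset.sum_nonneg fun i _ => psd_diag_nonneg hC i

lemma psd_trace_real {C : Matrix (Fin d) (Fin d) ℂ} (hC : C.PosSemidef) :
    C.trace = ((C.trace.re : ℝ) : ℂ) := by
  have h := psd_trace_nonneg hC
  rw [Complex.nonneg_iff] at h
  exact Complex.ext rfl h.2.symm

lemma psd_trace_zero {C : Matrix (Fin d) (Fin d) ℂ} (hC : C.PosSemidef)
    (h : C.trace = 0) : C = 0 := by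
  have hdiag : ∀ i, C i i = 0 := by
    intro i
    have := (Finset.sum_eq_zero_iff_of_nonneg (fun i _ => psd_diag_nonneg hC i)).mp h
    exact this i (Finset.mem_univ i)
  have hv : ∀ i, C *ᵥ Pi.single i 1 = 0 := by
    intro i
    refine (hC.dotProduct_mulVec_zero_iff _).mp ?_
    rw [star_single_one, mulVec_single, MulOpposite.op_one, one_smul,
      single_dotProduct, one_mul, col_apply]
    exact hdiag i
  ext i j
  have := congrFun (hv j) i
  simpa using this

lemma vmv_psd (w : Fin d → ℂ) : (vecMulVec w (star w)).PosSemidef := by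
  rw [show vecMulVec w (star w) = replicateCol (Fin 1) w * (replicateCol (Fin 1) w)ᴴ by
    rw [vecMulVec_eq (Fin 1)]
    congr 1]
  exact posSemidef_self_mul_conjTranspose _

lemma vmv_rank (w v : Fin d → ℂ) : (vecMulVec w v).rank ≤ 1 := by
  rw [vecMulVec_eq (Fin 1)]
  exact le_trans (rank_mul_le_left _ _) ((rank_le_card_width (replicateCol (Fin 1) w)).trans (by simp))

lemma vmv_mulVec (w v u : Fin d → ℂ) :
    vecMulVec w v *ᵥ u = (v ⬝ᵥ u) • w := by
  ext i
  simp [mulVec, vecMulVec_apply, dotProduct, Finset.mul_sum, Finset.sum_mul, mul_assoc,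
    mul_comm, mul_left_comm]

/-- Spectral decomposition of a PSD matrix into rank-one pieces. -/
lemma psd_decomp {M : Matrix (Fin d) (Fin d) ℂ} (hM : M.PosSemidef) :
    ∃ w : Fin d → (Fin d → ℂ), M = ∑ i, vecMulVec (w i) (star (w i)) := by
  classical
  have hH := hM.1
  set U : Matrix (Fin d) (Fin d) ℂ := (hH.eigenvectorUnitary : Matrix (Fin d) (Fin d) ℂ) with hU
  refine ⟨fun i => fun j => (Real.sqrt (hH.eigenvalues i) : ℂ) * U j i, ?_⟩
  ext i j
  rw [Matrix.sum_apply]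
  conv_lhs => rw [hH.spectral_theorem, Unitary.conjStarAlgAut_apply]
  rw [Matrix.mul_apply]
  refine Finset.sum_congr rfl fun k _ => ?_
  rw [Matrix.mul_diagonal]
  simp only [vecMulVec_apply, Pi.star_apply, star_mul', Complex.star_def,
    Complex.conj_ofReal, Function.comp_apply]
  have hs : (Real.sqrt (hH.eigenvalues k) : ℂ) * (Real.sqrt (hH.eigenvalues k) : ℂ)
      = ((hH.eigenvalues k : ℝ) : ℂ) := by
    rw [← Complex.ofReal_mul, Real.mul_self_sqrt (hM.eigenvalues_nonneg k)]
  have : (star U) k j = starRingEnd ℂ (U j k) := by simp [conjTranspose_apply]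
  rw [this, ← hU]
  rw [show (RCLike.ofReal (hH.eigenvalues k) : ℂ) = ((hH.eigenvalues k : ℝ) : ℂ) from rfl, ← hs]
  ring

lemma herm_eig_all_zero {M : Matrix (Fin d) (Fin d) ℂ} (hH : M.IsHermitian)
    (h : ∀ i, hH.eigenvalues i = 0) : M = 0 := by
  have := hH.spectral_theorem
  rw [show (RCLike.ofReal ∘ hH.eigenvalues : Fin d → ℂ) = 0 by
      ext i; simp [h i]] at this
  rw [this]
  ext i j
  simp [Matrix.mul_apply, Matrix.diagonal_apply]

lemma herm_rank_zero {M : Matrix (Fin d) (Fin d) ℂ} (hH : M.IsHermitian)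
    (h : M.rank = 0) : M = 0 := by
  rw [hH.rank_eq_card_non_zero_eigs] at h
  refine herm_eig_all_zero hH fun i => ?_
  by_contra hne
  have := Fintype.card_eq_zero_iff.mp h
  exact this.false ⟨i, hne⟩

lemma psd_rank_one_decomp (hd : 0 < d) {M : Matrix (Fin d) (Fin d) ℂ} (hM : M.PosSemidef)
    (hr : M.rank ≤ 1) : ∃ w : Fin d → ℂ, M = vecMulVec w (star w) := by
  classical
  have hH := hM.1
  -- find i₀ such that all other eigenvalues vanish
  have hi : ∃ i₀ : Fin d, ∀ k, k ≠ i₀ → hH.eigenvalues k = 0 := by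
    by_cases h : ∃ i, hH.eigenvalues i ≠ 0
    · obtain ⟨i₀, hi₀⟩ := h
      refine ⟨i₀, fun k hk => ?_⟩
      by_contra hkne
      have : 1 < Fintype.card {i // hH.eigenvalues i ≠ 0} :=
        Fintype.one_lt_card_iff_nontrivial.mpr ⟨⟨⟨i₀, hi₀⟩, ⟨k, hkne⟩, by simp [hk.symm]⟩⟩
      rw [hH.rank_eq_card_non_zero_eigs] at hr
      omega
    · push_neg at h
      exact ⟨⟨0, hd⟩, fun k _ => h k⟩
  obtain ⟨i₀, hi₀⟩ := hi
  set U : Matrix (Fin d) (Fin d) ℂ := (hH.eigenvectorUnitary : Matrix (Fin d) (Fin d) ℂ) with hU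
  refine ⟨fun j => (Real.sqrt (hH.eigenvalues i₀) : ℂ) * U j i₀, ?_⟩
  ext i j
  conv_lhs => rw [hH.spectral_theorem, Unitary.conjStarAlgAut_apply]
  rw [Matrix.mul_apply]
  rw [Finset.sum_eq_single i₀ (fun k _ hk => by
    rw [Matrix.mul_diagonal]
    simp [hi₀ k hk]) (by simp)]
  rw [Matrix.mul_diagonal]
  have hstar : (star U) i₀ j = starRingEnd ℂ (U j i₀) := by simp [conjTranspose_apply]
  simp only [vecMulVec_apply, Pi.star_apply, star_mul', Complex.star_def, Complex.conj_ofReal]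
  rw [hstar, ← hU]
  have hs : (Real.sqrt (hH.eigenvalues i₀) : ℂ) * (Real.sqrt (hH.eigenvalues i₀) : ℂ)
      = ((hH.eigenvalues i₀ : ℝ) : ℂ) := by
    rw [← Complex.ofReal_mul, Real.mul_self_sqrt (hM.eigenvalues_nonneg i₀)]
  rw [show ((RCLike.ofReal ∘ hH.eigenvalues) i₀ : ℂ) = ((hH.eigenvalues i₀ : ℝ) : ℂ) from rfl, ← hs]
  ring

lemma psd_le_rankOne (hd : 0 < d) {C P : Matrix (Fin d) (Fin d) ℂ}
    (hC : C.PosSemidef) (hP : P.PosSemidef) (hPC : (P - C).PosSemidef) (hr : P.rank ≤ 1) :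
    ∃ t : ℝ, 0 ≤ t ∧ C = (t : ℂ) • P := by
  obtain ⟨w, rfl⟩ := psd_rank_one_decomp hd hP hr
  by_cases hw : w = 0
  · subst hw
    have h0 : vecMulVec (0 : Fin d → ℂ) (star (0 : Fin d → ℂ)) = (0 : Matrix (Fin d) (Fin d) ℂ) := by
      ext i j; simp [vecMulVec_apply]
    rw [h0] at hPC ⊢
    rw [zero_sub] at hPC
    exact ⟨0, le_refl 0, by rw [psd_neg_zero hC hPC]; simp⟩
  · set s : ℂ := star w ⬝ᵥ w with hsdef
    have hs0 : s ≠ 0 := fun h => hw (dotProduct_star_self_eq_zero.mp h)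
    have hsnn : 0 ≤ s := dotProduct_star_self_nonneg w
    -- step 1
    have h1 : ∀ u, star w ⬝ᵥ u = 0 → C *ᵥ u = 0 := by
      intro u hu
      have hPu : vecMulVec w (star w) *ᵥ u = 0 := by
        rw [vmv_mulVec, hu, zero_smul]
      have hq1 : 0 ≤ star u ⬝ᵥ C *ᵥ u := hC.dotProduct_mulVec_nonneg u
      have hq2 := hPC.dotProduct_mulVec_nonneg u
      rw [sub_mulVec, dotProduct_sub, hPu, dotProduct_zero, zero_sub] at hq2
      exact (hC.dotProduct_mulVec_zero_iff u).mp (le_antisymm (neg_nonneg.mp hq2) hq1)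
    -- step 2 : C *ᵥ w = c • w
    set z : Fin d → ℂ := C *ᵥ w with hz
    set c : ℂ := (star w ⬝ᵥ z) / s with hc
    have h2 : z = c • w := by
      set u : Fin d → ℂ := z - c • w with hudef
      have hu : star w ⬝ᵥ u = 0 := by
        rw [hudef, dotProduct_sub, dotProduct_smul, hc, smul_eq_mul, div_mul_cancel₀ _ hs0,
          sub_self]
      have hCu : C *ᵥ u = 0 := h1 u hu
      have huw : star u ⬝ᵥ w = 0 := by
        rw [Matrix.star_dotProduct, hu, star_zero]
      have huz : star u ⬝ᵥ z = 0 := by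
        rw [hz, dotProduct_mulVec, ← hC.1.eq, ← star_mulVec, hCu, star_zero,
          zero_dotProduct]
      have huu : star u ⬝ᵥ u = 0 := by
        have hzu : z = u + c • w := by rw [hudef]; abel
        rw [hzu, dotProduct_add, dotProduct_smul, huw, smul_eq_mul, mul_zero, add_zero] at huz
        exact huz
      have : u = 0 := dotProduct_star_self_eq_zero.mp huu
      rw [hudef] at this
      ext k
      have := congrFun this k
      simpa [sub_eq_zero] using this
    -- step 3 : entrywise identity
    have h3 : C = (c / s) • vecMulVec w (star w) := by
      ext i j
      have he : (Pi.single j 1 : Fin d → ℂ) =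
          (star (w j) / s) • w + ((Pi.single j 1 : Fin d → ℂ) - (star (w j) / s) • w) := by
        ring_nf
      have huj : star w ⬝ᵥ ((Pi.single j 1 : Fin d → ℂ) - (star (w j) / s) • w) = 0 := by
        rw [dotProduct_sub, dotProduct_smul, dotProduct_single, smul_eq_mul,
          div_mul_cancel₀ _ hs0, mul_one]
        simp
      have hCe : C *ᵥ (Pi.single j 1 : Fin d → ℂ) = (star (w j) / s) • z := by
        conv_lhs => rw [he]
        rw [mulVec_add, mulVec_smul, h1 _ huj, add_zero, hz]
      have hCij : C i j = (star (w j) / s) * (c * w i) := by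
        have := congrFun hCe i
        rw [mulVec_single] at this
        simp only [MulOpposite.op_one, one_smul, col_apply] at this
        rw [this, h2]
        simp [mul_comm]
      rw [hCij]
      simp only [Matrix.smul_apply, vecMulVec_apply, Pi.star_apply, smul_eq_mul]
      field_simp
    -- step 4 : the scalar is a nonnegative real
    have hq : 0 ≤ star w ⬝ᵥ z := hC.dotProduct_mulVec_nonneg w
    rw [Complex.nonneg_iff] at hq hsnn
    have hsre : 0 < s.re := lt_of_le_of_ne hsnn.1 (by
      intro h
      exact hs0 (Complex.ext h.symm hsnn.2.symm))
    refine ⟨(star w ⬝ᵥ z).re / (s.re * s.re), ?_, ?_⟩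
    · exact div_nonneg hq.1 (le_of_lt (mul_pos hsre hsre))
    · rw [h3]
      congr 1
      rw [hc]
      have hzre : (star w ⬝ᵥ z) = (((star w ⬝ᵥ z).re : ℝ) : ℂ) := Complex.ext rfl hq.2.symm
      have hsre' : s = ((s.re : ℝ) : ℂ) := Complex.ext rfl hsnn.2.symm
      rw [hzre, hsre']
      push_cast
      rw [div_div]
      simp

lemma psd_le_rankOne' (hd : 0 < d) {C P : Matrix (Fin d) (Fin d) ℂ}
    (hC : C.PosSemidef) (hP : P.PosSemidef) (hPC : (P - C).PosSemidef) (hr : P.rank ≤ 1)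
    (hPne : P ≠ 0) :
    C = (((Matrix.trace C).re / (Matrix.trace P).re : ℝ) : ℂ) • P := by
  obtain ⟨t, ht, hCt⟩ := psd_le_rankOne hd hC hP hPC hr
  have htr : (Matrix.trace C).re = t * (Matrix.trace P).re := by
    rw [hCt, Matrix.trace_smul]
    simp
  have hPtr : (Matrix.trace P).re ≠ 0 := by
    intro h
    exact hPne (psd_trace_zero hP (by rw [psd_trace_real hP, h]; simp))
  rw [htr, mul_div_assoc, div_self hPtr, mul_one, hCt]

lemma rank_smul_le (c : ℂ) (M : Matrix (Fin d) (Fin d) ℂ) : (c • M).rank ≤ M.rank := by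
  have : c • M = (c • (1 : Matrix (Fin d) (Fin d) ℂ)) * M := by
    rw [Matrix.smul_mul, Matrix.one_mul]
  rw [this]
  exact Matrix.rank_mul_le_right _ _

end Aux

/-- A measurement is post-processing maximal iff it is rank-1. -/

theorem stmt1 {d n : ℕ} (hd : 1 ≤ d) (A : Fin n → Matrix (Fin d) (Fin d) ℂ)
    (hA : IsMeasurement A) :
    (∀ (m : ℕ) (B : Fin m → Matrix (Fin d) (Fin d) ℂ),
        IsMeasurement B → PostProc A B → PostProc B A) ↔
      (∀ x, A x ≠ 0 → (A x).rank = 1) := by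
  classical
  have hd0 : 0 < d := hd
  constructor
  · -- maximal → rank one
    intro hmax x₀ hx₀
    choose w hw using fun x => psd_decomp (hA.1 x)
    set E : Fin n × Fin d → Matrix (Fin d) (Fin d) ℂ :=
      fun p => vecMulVec (w p.1 p.2) (star (w p.1 p.2)) with hE
    set e := finProdFinEquiv (m := n) (n := d) with he
    set B : Fin (n * d) → Matrix (Fin d) (Fin d) ℂ := fun z => E (e.symm z) with hB
    have hBsum : ∑ z, B z = 1 := by
      rw [hB]
      rw [Equiv.sum_comp e.symm E]
      rw [Fintype.sum_prod_type]
      calc ∑ x, ∑ i, E (x, i) = ∑ x, A x := by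
            refine Finset.sum_congr rfl fun x _ => ?_
            rw [hw x]
        _ = 1 := hA.2
    have hBmeas : IsMeasurement B := ⟨fun z => vmv_psd _, hBsum⟩
    have hABpost : PostProc A B := by
      refine ⟨fun x z => if (e.symm z).1 = x then 1 else 0, fun x z => by positivity,
        fun z => by simp, fun x => ?_⟩
      have : ∀ z, ((if (e.symm z).1 = x then (1:ℝ) else 0 : ℝ) : ℂ) • B z
          = (fun p => ((if p.1 = x then (1:ℝ) else 0 : ℝ) : ℂ) • E p) (e.symm z) := fun z => rfl
      rw [Finset.sum_congr rfl fun z _ => this z,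
        Equiv.sum_comp e.symm (fun p => ((if p.1 = x then (1:ℝ) else 0 : ℝ) : ℂ) • E p),
        Fintype.sum_prod_type]
      have hsummand : ∀ x' : Fin n, ∑ i : Fin d, ((if x' = x then (1:ℝ) else 0 : ℝ) : ℂ) • E (x', i)
          = if x' = x then A x' else 0 := by
        intro x'
        by_cases hxx : x' = x
        · subst hxx
          simp only [if_true, eq_self_iff_true, Complex.ofReal_one, one_smul]
          exact (hw x').symm
        · simp [hxx]
      rw [Finset.sum_congr rfl fun x' _ => hsummand x']
      simp
    obtain ⟨ν, hν0, hν1, hν2⟩ := hmax (n * d) B hBmeas hABpost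
    have hex : ∃ z, ν z x₀ ≠ 0 := by
      by_contra hall
      push_neg at hall
      have := hν1 x₀
      rw [Finset.sum_congr rfl fun z _ => hall z] at this
      simp at this
    obtain ⟨z, hz⟩ := hex
    have hzpos : 0 < ν z x₀ := lt_of_le_of_ne (hν0 z x₀) (Ne.symm hz)
    -- B z - ν z x₀ • A x₀ is PSD
    have hPC : (B z - (ν z x₀ : ℂ) • A x₀).PosSemidef := by
      have hsplit := Finset.sum_erase_add Finset.univ
        (fun x => (ν z x : ℂ) • A x) (Finset.mem_univ x₀)
      have : B z - (ν z x₀ : ℂ) • A x₀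
          = ∑ x ∈ Finset.univ.erase x₀, (ν z x : ℂ) • A x := by
        rw [hν2 z, ← hsplit, add_sub_cancel_right]
      rw [this]
      exact psd_sum _ _ fun x _ => psd_smul (hν0 z x) (hA.1 x)
    have hC : ((ν z x₀ : ℂ) • A x₀).PosSemidef := psd_smul (hν0 z x₀) (hA.1 x₀)
    obtain ⟨t, ht, hCt⟩ := psd_le_rankOne hd0 hC (vmv_psd _) hPC (vmv_rank _ _)
    have hAx : A x₀ = ((ν z x₀ : ℂ))⁻¹ • ((t : ℂ) • B z) := by
      rw [← hCt, inv_smul_smul₀ (by exact_mod_cast hz)]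
    have hle : (A x₀).rank ≤ 1 := by
      rw [hAx]
      exact le_trans (rank_smul_le _ _) (le_trans (rank_smul_le _ _) (vmv_rank _ _))
    have hge : (A x₀).rank ≠ 0 := fun h => hx₀ (herm_rank_zero (hA.1 x₀).1 h)
    omega
  · -- rank one → maximal
    intro h1 m B hB hAB
    obtain ⟨μ, hμ0, hμ1, hμ2⟩ := hAB
    have hone : (1 : Matrix (Fin d) (Fin d) ℂ) ≠ 0 := by
      intro h
      have := congrFun (congrFun h ⟨0, hd0⟩) ⟨0, hd0⟩
      simp [Matrix.one_apply] at this
    have hm : 0 < m := by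
      rcases Nat.eq_zero_or_pos m with rfl | h
      · exfalso
        apply hone
        rw [← hB.2]
        simp
      · exact h
    -- fact 1: A x - μ x y • B y is PSD
    have fact1 : ∀ x y, (A x - (μ x y : ℂ) • B y).PosSemidef := by
      intro x y
      have hsplit := Finset.sum_erase_add Finset.univ
        (fun y' => (μ x y' : ℂ) • B y') (Finset.mem_univ y)
      have : A x - (μ x y : ℂ) • B y
          = ∑ y' ∈ Finset.univ.erase y, (μ x y' : ℂ) • B y' := by
        rw [hμ2 x, ← hsplit, add_sub_cancel_right]
      rw [this]
      exact psd_sum _ _ fun y' _ => psd_smul (hμ0 x y') (hB.1 y')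
    set ν : Fin m → Fin n → ℝ := fun y x =>
      if A x = 0 then (m : ℝ)⁻¹
      else μ x y * (Matrix.trace (B y)).re / (Matrix.trace (A x)).re with hν
    -- fact 2
    have fact2 : ∀ x y, (μ x y : ℂ) • B y = (ν y x : ℂ) • A x := by
      intro x y
      by_cases hx : A x = 0
      · have hCpos : ((μ x y : ℂ) • B y).PosSemidef := psd_smul (hμ0 x y) (hB.1 y)
        have hneg : (-((μ x y : ℂ) • B y)).PosSemidef := by
          have := fact1 x y
          rwa [hx, zero_sub] at this
        rw [psd_neg_zero hCpos hneg, hx, smul_zero]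
      · have hC : ((μ x y : ℂ) • B y).PosSemidef := psd_smul (hμ0 x y) (hB.1 y)
        have hr : (A x).rank ≤ 1 := le_of_eq (h1 x hx)
        have := psd_le_rankOne' hd0 hC (hA.1 x) (fact1 x y) hr hx
        rw [this]
        congr 2
        rw [hν]
        simp only [if_neg hx]
        rw [Matrix.trace_smul]
        congr 1
        simp
    refine ⟨ν, fun y x => ?_, fun x => ?_, fun y => ?_⟩
    · rw [hν]
      by_cases hx : A x = 0
      · simp [hx]
      · simp only [if_neg hx]
        have h1' : 0 ≤ (Matrix.trace (B y)).re := by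
          have := psd_trace_nonneg (hB.1 y)
          rw [Complex.nonneg_iff] at this
          exact this.1
        have h2' : 0 ≤ (Matrix.trace (A x)).re := by
          have := psd_trace_nonneg (hA.1 x)
          rw [Complex.nonneg_iff] at this
          exact this.1
        exact div_nonneg (mul_nonneg (hμ0 x y) h1') h2'
    · by_cases hx : A x = 0
      · rw [hν]
        simp only [if_pos hx]
        rw [Finset.sum_const, Finset.card_univ, Fintype.card_fin, nsmul_eq_mul]
        field_simp
      · have htrne : (Matrix.trace (A x)).re ≠ 0 := by
          intro h
          exact hx (psd_trace_zero (hA.1 x) (by rw [psd_trace_real (hA.1 x), h]; simp))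
        have htr : (Matrix.trace (A x)).re = ∑ y, μ x y * (Matrix.trace (B y)).re := by
          have := congrArg Matrix.trace (hμ2 x)
          rw [Matrix.trace_sum] at this
          have := congrArg Complex.re this
          rw [Complex.re_sum] at this
          rw [this]
          refine Finset.sum_congr rfl fun y _ => ?_
          rw [Matrix.trace_smul]
          simp
        rw [hν]
        simp only [if_neg hx]
        rw [← Finset.sum_div, ← htr, div_self htrne]
    · have : ∑ x, (ν y x : ℂ) • A x = ∑ x, (μ x y : ℂ) • B y := by
        refine Finset.sum_congr rfl fun x _ => (fact2 x y).symm
      rw [this, ← Finset.sum_smul]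
      have : (∑ x, (μ x y : ℂ)) = ((∑ x, μ x y : ℝ) : ℂ) := by push_cast; rfl
      rw [this, hμ1 y]
      simp
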